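/- arXiv:1606.05021 — 3 statements merged into one kernel-verified Lean document; each statement's English description precedes it below -/
import Mathlib

section
/- Let Φ₀ be an n×d₀ real matrix of full column rank d₀ and Φ an n×k real matrix of full column rank k with d₀ < k, such that the column space of Φ₀ is strictly contained in the column space of Φ. Let Q₀ = Φ₀(Φ₀ᵀΦ₀)⁻¹Φ₀ᵀ and Q_Φ = Φ(ΦᵀΦ)⁻¹Φᵀ be the orthogonal projection matrices onto the column spaces. Then for any ω ∈ (0,1), Φ(ΦᵀΦ + (ω/(1-ω))·Φᵀ(I-Q₀)Φ)⁻¹Φᵀ = (1-ω)·Q_Φ + ω·Q₀. -/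
open Matrix

lemma gram_isUnit {n m : ℕ} (A : Matrix (Fin n) (Fin m) ℝ) (h : A.rank = m) :
    IsUnit (Aᵀ * A) := by
  have hker : LinearMap.ker A.mulVecLin = ⊥ := by
    have h1 := A.mulVecLin.finrank_range_add_finrank_ker
    rw [Module.finrank_pi, Fintype.card_fin] at h1
    have h2 : Module.finrank ℝ (LinearMap.range A.mulVecLin) = m := h
    rw [h2] at h1
    have h3 : Module.finrank ℝ (LinearMap.ker A.mulVecLin) = 0 := by omega
    exact Submodule.finrank_eq_zero.mp h3
  have hker2 : LinearMap.ker (Aᵀ * A).mulVecLin = ⊥ := by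
    rw [Matrix.ker_mulVecLin_transpose_mul_self]; exact hker
  have hinj : Function.Injective (Aᵀ * A).mulVec := by
    have := LinearMap.ker_eq_bot.mp hker2
    exact this
  exact Matrix.mulVec_injective_iff_isUnit.mp hinj

lemma exists_factor {n d k : ℕ} (B : Matrix (Fin n) (Fin d) ℝ) (A : Matrix (Fin n) (Fin k) ℝ)
    (h : LinearMap.range B.mulVecLin ≤ LinearMap.range A.mulVecLin) :
    ∃ C : Matrix (Fin k) (Fin d) ℝ, A * C = B := by
  choose c hc using fun j => h (LinearMap.mem_range_self B.mulVecLin (Pi.single j 1))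
  refine ⟨Matrix.of (fun i j => c j i), ?_⟩
  ext i j
  have := congrFun (hc j) i
  simp only [Matrix.mulVecLin_apply] at this
  rw [Matrix.mul_apply]
  simp only [Matrix.mulVec, dotProduct] at this
  simpa [Pi.single_apply, mul_ite, Finset.sum_ite_eq'] using this

/-- Lemma 1 (matrix form): if the column space of `Φ₀` is strictly contained in
that of `Φ`, both of full column rank, then for any `ω ∈ (0,1)`,
`Φ (ΦᵀΦ + (ω/(1-ω)) Φᵀ(I-Q₀)Φ)⁻¹ Φᵀ = (1-ω) Q_Φ + ω Q₀`. -/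
theorem fhs_projection_identity (n d₀ k : ℕ)
    (Φ₀ : Matrix (Fin n) (Fin d₀) ℝ) (Φ : Matrix (Fin n) (Fin k) ℝ)
    (hrank₀ : Φ₀.rank = d₀) (hrank : Φ.rank = k) (hdk : d₀ < k)
    (hsub : LinearMap.range Φ₀.mulVecLin < LinearMap.range Φ.mulVecLin)
    (ω : ℝ) (hω0 : 0 < ω) (hω1 : ω < 1) :
    Φ * (Φᵀ * Φ + (ω / (1 - ω)) • (Φᵀ * (1 - Φ₀ * (Φ₀ᵀ * Φ₀)⁻¹ * Φ₀ᵀ) * Φ))⁻¹ * Φᵀ =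
      (1 - ω) • (Φ * (Φᵀ * Φ)⁻¹ * Φᵀ) + ω • (Φ₀ * (Φ₀ᵀ * Φ₀)⁻¹ * Φ₀ᵀ) := by
  have hUA : IsUnit (Φᵀ * Φ) := gram_isUnit Φ hrank
  have hUG : IsUnit (Φ₀ᵀ * Φ₀) := gram_isUnit Φ₀ hrank₀
  set A : Matrix (Fin k) (Fin k) ℝ := Φᵀ * Φ with hAdef
  set G : Matrix (Fin d₀) (Fin d₀) ℝ := Φ₀ᵀ * Φ₀ with hGdef
  have hA1 : A⁻¹ * A = 1 := nonsing_inv_mul _ ((Matrix.isUnit_iff_isUnit_det _).mp hUA)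
  have hG1 : G⁻¹ * G = 1 := nonsing_inv_mul _ ((Matrix.isUnit_iff_isUnit_det _).mp hUG)
  set Q₀ : Matrix (Fin n) (Fin n) ℝ := Φ₀ * G⁻¹ * Φ₀ᵀ with hQ₀def
  set QΦ : Matrix (Fin n) (Fin n) ℝ := Φ * A⁻¹ * Φᵀ with hQΦdef
  obtain ⟨C, hC⟩ := exists_factor Φ₀ Φ hsub.le
  have hΦtΦ₀ : Φᵀ * Φ₀ = A * C := by rw [← hC, ← Matrix.mul_assoc, ← hAdef]
  have hQΦΦ₀ : QΦ * Φ₀ = Φ₀ := by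
    rw [hQΦdef]
    simp only [Matrix.mul_assoc]
    rw [hΦtΦ₀, ← Matrix.mul_assoc A⁻¹ A C, hA1, Matrix.one_mul, hC]
  have hQΦQ₀ : QΦ * Q₀ = Q₀ := by
    rw [hQ₀def, ← Matrix.mul_assoc, ← Matrix.mul_assoc, hQΦΦ₀]
  have hAsymm : Aᵀ = A := by rw [hAdef, Matrix.transpose_mul, transpose_transpose]
  have hGsymm : Gᵀ = G := by rw [hGdef, Matrix.transpose_mul, transpose_transpose]
  have hQΦsymm : QΦᵀ = QΦ := by
    rw [hQΦdef, Matrix.transpose_mul, Matrix.transpose_mul, transpose_transpose,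
      Matrix.transpose_nonsing_inv, hAsymm, ← Matrix.mul_assoc]
  have hQ₀symm : Q₀ᵀ = Q₀ := by
    rw [hQ₀def, Matrix.transpose_mul, Matrix.transpose_mul, transpose_transpose,
      Matrix.transpose_nonsing_inv, hGsymm, ← Matrix.mul_assoc]
  have hQ₀QΦ : Q₀ * QΦ = Q₀ := by
    have h := congrArg Matrix.transpose hQΦQ₀
    rwa [Matrix.transpose_mul, hQΦsymm, hQ₀symm] at h
  have hQ₀Q₀ : Q₀ * Q₀ = Q₀ := by
    rw [hQ₀def]
    simp only [Matrix.mul_assoc]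
    rw [← Matrix.mul_assoc Φ₀ᵀ Φ₀, ← hGdef, ← Matrix.mul_assoc G⁻¹ G, hG1, Matrix.one_mul]
  set S : Matrix (Fin k) (Fin k) ℝ := Φᵀ * Q₀ * Φ with hSdef
  have hmid : Φ * (A⁻¹ * (Φᵀ * (Q₀ * Φ))) = Q₀ * Φ := by
    simp only [← Matrix.mul_assoc]
    rw [← hQΦdef, hQΦQ₀]
  have hS : S * (A⁻¹ * S) = S := by
    rw [hSdef]
    simp only [Matrix.mul_assoc]
    rw [hmid, ← Matrix.mul_assoc Q₀ Q₀ Φ, hQ₀Q₀]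
  have hM : Φᵀ * (1 - Q₀) * Φ = A - S := by
    rw [Matrix.mul_sub, Matrix.mul_one, Matrix.sub_mul, ← hAdef, ← hSdef]
  have key : ((1 - ω) • A⁻¹ + ω • (A⁻¹ * (S * A⁻¹))) * (A + (ω / (1 - ω)) • (A - S)) = 1 := by
    have h1ω : (1:ℝ) - ω ≠ 0 := by linarith
    simp only [Matrix.mul_add, Matrix.add_mul, Matrix.mul_sub, Matrix.sub_mul, Matrix.mul_smul,
      Matrix.smul_mul, smul_smul, Matrix.mul_assoc, hS, hA1, Matrix.mul_one]
    match_scalars <;> field_simp <;> ring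
  have hinv := Matrix.inv_eq_left_inv key
  have hfin : Φ * A⁻¹ * S * A⁻¹ * Φᵀ = Q₀ := by
    rw [hSdef]
    simp only [← Matrix.mul_assoc]
    rw [← hQΦdef, hQΦQ₀, Matrix.mul_assoc Q₀ Φ A⁻¹, Matrix.mul_assoc Q₀ (Φ * A⁻¹) Φᵀ,
      ← hQΦdef, hQ₀QΦ]
  rw [hM, hinv]
  simp only [Matrix.mul_add, Matrix.add_mul, Matrix.mul_smul, Matrix.smul_mul]
  simp only [← Matrix.mul_assoc]
  rw [← hQΦdef, hfin]
end

section
/- Let a > 0, b > 0, and H ≥ 0 be real numbers. Then ∫₀¹ ω^(a-1) (1-ω)^(b-1) exp(-Hω) dω ≤ exp(-H) · B(a,b) · (1 + (b/(a+b))·exp(H)), where B(a,b) = Γ(a)Γ(b)/Γ(a+b) is the Beta function. -/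
open intervalIntegral

lemma beta_integrable (a b : ℝ) (ha : 0 < a) (hb : 0 < b) :
    IntervalIntegrable (fun x : ℝ => x ^ (a - 1) * (1 - x) ^ (b - 1))
      MeasureTheory.volume 0 1 := by
  have h1 : IntervalIntegrable (fun x : ℝ => x ^ (a - 1) * (1 - x) ^ (b - 1))
      MeasureTheory.volume 0 (1/2) := by
    apply IntervalIntegrable.mul_continuousOn
    · exact intervalIntegral.intervalIntegrable_rpow' (by linarith)
    · apply ContinuousOn.rpow_const (by fun_prop)
      intro x hx
      rw [Set.uIcc_of_le (by norm_num)] at hx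
      left; intro h; linarith [hx.2]
  have h2 : IntervalIntegrable (fun x : ℝ => x ^ (a - 1) * (1 - x) ^ (b - 1))
      MeasureTheory.volume (1/2) 1 := by
    have hb2 : IntervalIntegrable (fun x : ℝ => (1 - x) ^ (b - 1))
        MeasureTheory.volume (1/2) 1 := by
      have := (intervalIntegral.intervalIntegrable_rpow' (r := b - 1) (by linarith)
        (a := 0) (b := 1/2)).comp_sub_left 1
      norm_num at this
      exact this.symm
    apply hb2.continuousOn_mul
    apply ContinuousOn.rpow_const (by fun_prop)
    intro x hx
    rw [Set.uIcc_of_le (by norm_num)] at hx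
    left; intro h; rw [h] at hx; norm_num at hx
  exact h1.trans h2

lemma beta_eval (a b : ℝ) (ha : 0 < a) (hb : 0 < b) :
    ∫ ω in (0:ℝ)..1, ω ^ (a - 1) * (1 - ω) ^ (b - 1)
      = Real.Gamma a * Real.Gamma b / Real.Gamma (a + b) := by
  have h := Complex.Gamma_mul_Gamma_eq_betaIntegral (s := (a:ℂ)) (t := (b:ℂ))
    (by simpa using ha) (by simpa using hb)
  have hbeta : Complex.betaIntegral a b
      = ((∫ ω in (0:ℝ)..1, ω ^ (a - 1) * (1 - ω) ^ (b - 1) : ℝ) : ℂ) := by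
    rw [Complex.betaIntegral, ← intervalIntegral.integral_ofReal]
    apply intervalIntegral.integral_congr
    intro x hx
    rw [Set.uIcc_of_le (by norm_num)] at hx
    push_cast
    rw [Complex.ofReal_cpow hx.1, Complex.ofReal_cpow (by linarith [hx.2] : (0:ℝ) ≤ 1 - x)]
    push_cast
    ring
  rw [hbeta, ← Complex.ofReal_add, Complex.Gamma_ofReal, Complex.Gamma_ofReal,
    Complex.Gamma_ofReal, ← Complex.ofReal_mul, ← Complex.ofReal_mul] at h
  have h' := Complex.ofReal_injective h
  have hG : Real.Gamma (a + b) ≠ 0 := (Real.Gamma_pos_of_pos (by linarith)).ne'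
  field_simp
  linarith [h']

/-- Upper bound on the normalizing constant (part of Lemma 3):
`∫₀¹ ω^(a-1)(1-ω)^(b-1)e^(-Hω) dω ≤ e^(-H) B(a,b) (1 + (b/(a+b)) e^H)`. -/
theorem fhs_normalizing_upper (a b H : ℝ) (ha : 0 < a) (hb : 0 < b) (hH : 0 ≤ H) :
    ∫ ω in (0:ℝ)..1, ω ^ (a - 1) * (1 - ω) ^ (b - 1) * Real.exp (-H * ω) ≤
      Real.exp (-H) * (Real.Gamma a * Real.Gamma b / Real.Gamma (a + b)) *
        (1 + (b / (a + b)) * Real.exp H) := by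
  set B := Real.Gamma a * Real.Gamma b / Real.Gamma (a + b) with hB
  have hG : ∀ x : ℝ, 0 < x → 0 < Real.Gamma x := fun x hx => Real.Gamma_pos_of_pos hx
  have hBpos : 0 < B := by
    apply div_pos (mul_pos (hG a ha) (hG b hb)) (hG _ (by linarith))
  -- second beta value
  have hbeta2 : ∫ ω in (0:ℝ)..1, ω ^ (a - 1) * (1 - ω) ^ b = B * (b / (a + b)) := by
    have := beta_eval a (b + 1) ha (by linarith)
    simp only [add_sub_cancel_right] at this
    rw [this, Real.Gamma_add_one hb.ne', show a + (b + 1) = (a + b) + 1 by ring,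
      Real.Gamma_add_one (by positivity)]
    rw [div_mul_div_comm, mul_comm (Real.Gamma (a + b)) (a + b)]
    congr 1
    ring
  have hbeta1 := beta_eval a b ha hb
  -- pointwise bound
  have hpt : ∀ ω ∈ Set.Icc (0:ℝ) 1,
      ω ^ (a - 1) * (1 - ω) ^ (b - 1) * Real.exp (-H * ω) ≤
      Real.exp (-H) * (ω ^ (a - 1) * (1 - ω) ^ (b - 1))
        + (Real.exp (-H) * (Real.exp H - 1)) * (ω ^ (a - 1) * (1 - ω) ^ b) := by
    intro ω hω
    obtain ⟨h0, h1⟩ := hω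
    have hconv : Real.exp (H * (1 - ω)) ≤ 1 + (1 - ω) * (Real.exp H - 1) := by
      have hcv := convexOn_exp.2 (Set.mem_univ (0:ℝ)) (Set.mem_univ H)
        (show (0:ℝ) ≤ ω from h0) (show (0:ℝ) ≤ 1 - ω by linarith)
        (show ω + (1 - ω) = 1 by ring)
      simp only [smul_eq_mul, mul_zero, zero_add, Real.exp_zero, mul_one] at hcv
      rw [mul_comm (1 - ω) H] at hcv
      nlinarith [hcv]
    have hexp : Real.exp (-H * ω) = Real.exp (-H) * Real.exp (H * (1 - ω)) := by
      rw [← Real.exp_add]; ring_nf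
    have hfnn : 0 ≤ ω ^ (a - 1) * (1 - ω) ^ (b - 1) :=
      mul_nonneg (Real.rpow_nonneg h0 _) (Real.rpow_nonneg (by linarith) _)
    have hkey : ω ^ (a - 1) * (1 - ω) ^ (b - 1) * (1 - ω) = ω ^ (a - 1) * (1 - ω) ^ b := by
      rcases eq_or_lt_of_le h1 with h | h
      · rw [← h]; simp [Real.zero_rpow hb.ne']
      · rw [mul_assoc, ← Real.rpow_add_one (by linarith : (1:ℝ) - ω ≠ 0)]
        ring_nf
    calc ω ^ (a - 1) * (1 - ω) ^ (b - 1) * Real.exp (-H * ω)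
        = Real.exp (-H) * (ω ^ (a - 1) * (1 - ω) ^ (b - 1) * Real.exp (H * (1 - ω))) := by
          rw [hexp]; ring
      _ ≤ Real.exp (-H) * (ω ^ (a - 1) * (1 - ω) ^ (b - 1) * (1 + (1 - ω) * (Real.exp H - 1))) := by
          apply mul_le_mul_of_nonneg_left _ (Real.exp_nonneg _)
          exact mul_le_mul_of_nonneg_left hconv hfnn
      _ = Real.exp (-H) * (ω ^ (a - 1) * (1 - ω) ^ (b - 1))
          + (Real.exp (-H) * (Real.exp H - 1)) * (ω ^ (a - 1) * (1 - ω) ^ (b - 1) * (1 - ω)) := by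
          ring
      _ = _ := by rw [hkey]
  -- integrability
  have hi1 := beta_integrable a b ha hb
  have hi2 : IntervalIntegrable (fun x : ℝ => x ^ (a - 1) * (1 - x) ^ b)
      MeasureTheory.volume 0 1 := by
    have := beta_integrable a (b + 1) ha (by linarith)
    simpa using this
  have hiL : IntervalIntegrable
      (fun x : ℝ => x ^ (a - 1) * (1 - x) ^ (b - 1) * Real.exp (-H * x))
      MeasureTheory.volume 0 1 :=
    hi1.mul_continuousOn (by fun_prop)
  have hiR : IntervalIntegrable (fun x : ℝ =>
      Real.exp (-H) * (x ^ (a - 1) * (1 - x) ^ (b - 1))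
        + (Real.exp (-H) * (Real.exp H - 1)) * (x ^ (a - 1) * (1 - x) ^ b))
      MeasureTheory.volume 0 1 :=
    (hi1.const_mul _).add (hi2.const_mul _)
  have hmono := intervalIntegral.integral_mono_on (by norm_num) hiL hiR hpt
  rw [intervalIntegral.integral_add ((hi1).const_mul _) ((hi2).const_mul _),
    intervalIntegral.integral_const_mul, intervalIntegral.integral_const_mul,
    hbeta1, hbeta2, ← hB] at hmono
  have hexpm : Real.exp (-H) * (Real.exp H - 1) ≤ Real.exp (-H) * Real.exp H := by
    nlinarith [Real.exp_nonneg (-H)]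
  have hbb : 0 ≤ B * (b / (a + b)) := mul_nonneg hBpos.le (by positivity)
  calc _ ≤ Real.exp (-H) * B + Real.exp (-H) * (Real.exp H - 1) * (B * (b / (a + b))) := hmono
    _ ≤ Real.exp (-H) * B + Real.exp (-H) * Real.exp H * (B * (b / (a + b))) := by
        exact add_le_add (le_refl _) (mul_le_mul_of_nonneg_right hexpm hbb)
    _ = Real.exp (-H) * B * (1 + (b / (a + b)) * Real.exp H) := by ring
end

section
/- Let a > 0, b > 0, and H ≥ 0 be real numbers. Then ∫₀¹ ω^(a-1) (1-ω)^(b-1) exp(-Hω) dω ≥ exp(-H) · B(a,b) · (1 + (b/(a+b))·H), where B(a,b) is the Beta function. -/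
open MeasureTheory intervalIntegral Real

lemma beta_eqon (a b : ℝ) :
    Set.EqOn (fun x : ℝ => ((x ^ (a-1) * (1-x) ^ (b-1) : ℝ) : ℂ))
      (fun x : ℝ => (x:ℂ) ^ ((a:ℂ)-1) * (1-(x:ℂ)) ^ ((b:ℂ)-1)) (Set.uIcc 0 1) := by
  intro x hx
  rw [Set.uIcc_of_le (by norm_num)] at hx
  obtain ⟨h0, h1⟩ := hx
  push_cast
  rw [Complex.ofReal_cpow h0, Complex.ofReal_cpow (by linarith)]
  push_cast
  ring_nf

lemma cplx_integrable (a b : ℝ) (ha : 0 < a) (hb : 0 < b) :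
    IntervalIntegrable (fun x : ℝ => ((x ^ (a-1) * (1-x) ^ (b-1) : ℝ) : ℂ)) volume 0 1 := by
  have h := Complex.betaIntegral_convergent (u := a) (v := b) (by simpa) (by simpa)
  refine h.congr ?_
  intro x hx
  exact (beta_eqon a b (Set.uIoc_subset_uIcc hx)).symm

lemma realBeta_integrable (a b : ℝ) (ha : 0 < a) (hb : 0 < b) :
    IntervalIntegrable (fun x : ℝ => x ^ (a-1) * (1-x) ^ (b-1)) volume 0 1 := by
  have h2 := cplx_integrable a b ha hb
  have : IntervalIntegrable (fun x : ℝ => (((x ^ (a-1) * (1-x) ^ (b-1) : ℝ) : ℂ)).re) volume 0 1 := by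
    constructor
    · exact h2.1.re
    · exact h2.2.re
  simpa using this

lemma realBeta (a b : ℝ) (ha : 0 < a) (hb : 0 < b) :
    ∫ x in (0:ℝ)..1, x ^ (a-1) * (1-x) ^ (b-1)
      = Real.Gamma a * Real.Gamma b / Real.Gamma (a+b) := by
  have hab : 0 < Real.Gamma (a+b) := Real.Gamma_pos_of_pos (by linarith)
  have key := Complex.Gamma_mul_Gamma_eq_betaIntegral (s := a) (t := b) (by simpa) (by simpa)
  have hbeta : Complex.betaIntegral a b
      = ((∫ x in (0:ℝ)..1, x ^ (a-1) * (1-x) ^ (b-1) : ℝ) : ℂ) := by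
    rw [Complex.betaIntegral, ← intervalIntegral.integral_ofReal]
    exact (intervalIntegral.integral_congr (beta_eqon a b)).symm
  rw [hbeta] at key
  have : (Real.Gamma a * Real.Gamma b : ℂ)
      = (Real.Gamma (a+b) * ∫ x in (0:ℝ)..1, x ^ (a-1) * (1-x) ^ (b-1) : ℝ) := by
    push_cast
    rw [← Complex.Gamma_ofReal, ← Complex.Gamma_ofReal, ← Complex.Gamma_ofReal]
    push_cast
    exact key
  have h3 := Complex.ofReal_injective (by exact_mod_cast this)
  field_simp
  linarith [h3]



/-- Lower bound on the normalizing constant (part of Lemma 3):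
`∫₀¹ ω^(a-1)(1-ω)^(b-1)e^(-Hω) dω ≥ e^(-H) B(a,b) (1 + (b/(a+b)) H)`. -/
theorem fhs_normalizing_lower (a b H : ℝ) (ha : 0 < a) (hb : 0 < b) (hH : 0 ≤ H) :
    ∫ ω in (0:ℝ)..1, ω ^ (a - 1) * (1 - ω) ^ (b - 1) * Real.exp (-H * ω) ≥
      Real.exp (-H) * (Real.Gamma a * Real.Gamma b / Real.Gamma (a + b)) *
        (1 + (b / (a + b)) * H) := by
  have hab : (0:ℝ) < a + b := by linarith
  have hGab : 0 < Real.Gamma (a+b) := Real.Gamma_pos_of_pos hab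
  have hI1 := realBeta_integrable a b ha hb
  have hI2 := realBeta_integrable a (b+1) ha (by linarith)
  set g : ℝ → ℝ := fun ω => Real.exp (-H) * (ω^(a-1)*(1-ω)^(b-1))
      + (Real.exp (-H)*H) * (ω^(a-1)*(1-ω)^(b+1-1)) with hg
  have hgint : IntervalIntegrable g volume 0 1 :=
    (hI1.const_mul _).add (hI2.const_mul _)
  have hfint : IntervalIntegrable
      (fun ω : ℝ => ω ^ (a - 1) * (1 - ω) ^ (b - 1) * Real.exp (-H * ω)) volume 0 1 :=
    hI1.mul_continuousOn (Continuous.continuousOn (by continuity))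
  have hmono : ∫ ω in (0:ℝ)..1, g ω ≤
      ∫ ω in (0:ℝ)..1, ω ^ (a - 1) * (1 - ω) ^ (b - 1) * Real.exp (-H * ω) := by
    apply intervalIntegral.integral_mono_on (by norm_num) hgint hfint
    intro ω hω
    obtain ⟨h0, h1⟩ := hω
    have hpow : (1-ω)^(b+1-1) = (1-ω)^(b-1) * (1-ω) := by
      rcases eq_or_lt_of_le h1 with h | h
      · simp [← h, Real.zero_rpow hb.ne']
      · rw [show b+1-1 = (b-1)+1 by ring, Real.rpow_add_one (by linarith)]
    have hfac : 0 ≤ ω^(a-1)*(1-ω)^(b-1) :=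
      mul_nonneg (Real.rpow_nonneg h0 _) (Real.rpow_nonneg (by linarith) _)
    have hkey : Real.exp (-H) * (1 + H*(1-ω)) ≤ Real.exp (-H*ω) := by
      have h2 : H*(1-ω) + 1 ≤ Real.exp (H*(1-ω)) := Real.add_one_le_exp _
      have h3 : Real.exp (-H) * Real.exp (H*(1-ω)) = Real.exp (-H*ω) := by
        rw [← Real.exp_add]; ring_nf
      nlinarith [Real.exp_pos (-H)]
    calc g ω = (ω^(a-1)*(1-ω)^(b-1)) * (Real.exp (-H) * (1 + H*(1-ω))) := by
          rw [hg]; simp only [hpow]; ring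
      _ ≤ (ω^(a-1)*(1-ω)^(b-1)) * Real.exp (-H*ω) := by
          exact mul_le_mul_of_nonneg_left hkey hfac
      _ = ω ^ (a - 1) * (1 - ω) ^ (b - 1) * Real.exp (-H * ω) := by ring
  have hval : ∫ ω in (0:ℝ)..1, g ω
      = Real.exp (-H) * (Real.Gamma a * Real.Gamma b / Real.Gamma (a+b))
        + (Real.exp (-H)*H) * (Real.Gamma a * Real.Gamma (b+1) / Real.Gamma (a+(b+1))) := by
    rw [hg, intervalIntegral.integral_add (hI1.const_mul _) (hI2.const_mul _),
      intervalIntegral.integral_const_mul, intervalIntegral.integral_const_mul,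
      realBeta a b ha hb, realBeta a (b+1) ha (by linarith)]
  rw [ge_iff_le]
  refine le_trans (le_of_eq ?_) (hval ▸ hmono)
  have hGb1 : Real.Gamma (b+1) = b * Real.Gamma b := Real.Gamma_add_one hb.ne'
  have hGab1 : Real.Gamma (a+(b+1)) = (a+b) * Real.Gamma (a+b) := by
    rw [show a+(b+1) = (a+b)+1 by ring, Real.Gamma_add_one hab.ne']
  rw [hGb1, hGab1]
  field_simp
end
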